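/- Let U ⊆ ℝ^N be open, α a smooth 1-form on U, β a closed smooth 1-form on U, f : U → ℝ smooth, and ζ a smooth vector field with L_ζ(α + β) = df. Then the function J(x) = (α+β)(x)(ζ(x)) − f(x) is preserved under the flow of ζ: dJ(x)(ζ(x)) = 0 for all x ∈ U. -/

import Mathlib

noncomputable section
open scoped ContDiff

/-- The Lie derivative of a 1-form `α` on `ℝ^N` along a vector field `ζ`:
`(L_ζ α)(x)(v) = (Dα(x)(ζ(x)))(v) + α(x)(Dζ(x)(v))`. -/
def lieDerivV {N : ℕ} (ζ : (Fin N → ℝ) → (Fin N → ℝ))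
    (α : (Fin N → ℝ) → ((Fin N → ℝ) →L[ℝ] ℝ)) (x : Fin N → ℝ) :
    (Fin N → ℝ) →L[ℝ] ℝ :=
  fderiv ℝ α x (ζ x) + (α x).comp (fderiv ℝ ζ x)

/-- The exterior derivative of a 1-form on `ℝ^N`:
`dα(x)(u,v) = (Dα(x)u)(v) − (Dα(x)v)(u)`. -/
def extDerivV {N : ℕ} (α : (Fin N → ℝ) → ((Fin N → ℝ) →L[ℝ] ℝ)) (x u v : Fin N → ℝ) : ℝ :=
  fderiv ℝ α x u v - fderiv ℝ α x v u

/-- for a weak Noether symmetry `ζ` (`L_ζ(α + β) = df` on `U`, `β` closed),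
the function `J(x) = (α+β)(x)(ζ(x)) − f(x)` is preserved under the flow of `ζ`. -/
theorem weak_noether_integral_preserved_by_flow {N : ℕ} (hN : 1 ≤ N)
    (U : Set (Fin N → ℝ)) (hU : IsOpen U)
    (α β : (Fin N → ℝ) → ((Fin N → ℝ) →L[ℝ] ℝ))
    (ζ : (Fin N → ℝ) → (Fin N → ℝ)) (f : (Fin N → ℝ) → ℝ)
    (hα : ContDiffOn ℝ ∞ α U) (hβ : ContDiffOn ℝ ∞ β U)
    (hζ : ContDiffOn ℝ ∞ ζ U) (hf : ContDiffOn ℝ ∞ f U)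
    (hβclosed : ∀ x ∈ U, ∀ u v, extDerivV β x u v = 0)
    (hsym : ∀ x ∈ U, lieDerivV ζ (fun y => α y + β y) x = fderiv ℝ f x) :
    ∀ x ∈ U, fderiv ℝ (fun y => (α y + β y) (ζ y) - f y) x (ζ x) = 0 := by
  intro x hx
  have hmem := hU.mem_nhds hx
  have hγ : DifferentiableAt ℝ (fun y => α y + β y) x :=
    ((hα.add hβ).contDiffAt hmem).differentiableAt (by simp)
  have hζ' : DifferentiableAt ℝ ζ x :=
    (hζ.contDiffAt hmem).differentiableAt (by simp)
  have hf' : DifferentiableAt ℝ f x :=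
    (hf.contDiffAt hmem).differentiableAt (by simp)
  have h1 : HasFDerivAt (fun y => (α y + β y) (ζ y))
      (((fderiv ℝ (fun y => α y + β y) x).flip (ζ x)) +
        ((α x + β x)).comp (fderiv ℝ ζ x)) x := by
    have := hγ.hasFDerivAt.clm_apply hζ'.hasFDerivAt
    convert this using 1
    case e'_8 => rfl
    ext v
    simp [add_comm]
    case e'_12 => exact add_comm _ _
  have h2 : HasFDerivAt (fun y => (α y + β y) (ζ y) - f y)
      ((((fderiv ℝ (fun y => α y + β y) x).flip (ζ x)) +
        ((α x + β x)).comp (fderiv ℝ ζ x)) - fderiv ℝ f x) x :=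
    h1.sub hf'.hasFDerivAt
  rw [h2.fderiv]
  have hs := hsym x hx
  have hs' := congrArg (fun L => L (ζ x)) hs
  simp only [lieDerivV] at hs'
  simp only [ContinuousLinearMap.sub_apply, ContinuousLinearMap.add_apply,
    ContinuousLinearMap.coe_comp', Function.comp, ContinuousLinearMap.flip_apply] at hs' ⊢
  linarith
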